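/- Let R be an integral domain and let M be a q×p matrix over R that is diagonalizable with divisibility chain p_0, …, p_{l-1} (all p_i nonzero). Regard M as the R-linear map Matrix.toLin' M : R^p → R^q. Then the kernel of this linear map is a free R-module of rank p − l, and it is a direct summand of R^p (i.e. it admits a complementary submodule). -/

import Mathlib

/-- The `q × p` block matrix whose upper-left `l × l` block is `Matrix.diagonal d` and whose
other blocks are zero. -/
noncomputable def blockDiag {R : Type*} [CommRing R] {q p l : ℕ} (hq : l ≤ q) (hp : l ≤ p)
    (d : Fin l → R) : Matrix (Fin q) (Fin p) R :=
  Matrix.reindex (finSumFinEquiv.trans (finCongr (Nat.add_sub_cancel' hq)))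
    (finSumFinEquiv.trans (finCongr (Nat.add_sub_cancel' hp)))
    (Matrix.fromBlocks (Matrix.diagonal d) 0 0 0)

/-- A `q × p` matrix `M` over `R` is diagonalizable with divisibility chain `d 0, …, d (l-1)`:
there are invertible matrices `P ∈ GL(q,R)` and `Q ∈ GL(p,R)` such that `P * M * Q` is the
block matrix with upper-left `l × l` block `diag (d 0, …, d (l-1))` and zero elsewhere, where
the `d i` are nonzero and `d i ∣ d (i+1)`. -/
def IsDiagonalizableWithChain {R : Type*} [CommRing R] {q p : ℕ}
    (M : Matrix (Fin q) (Fin p) R) (l : ℕ) (d : Fin l → R) : Prop :=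
  ∃ (hq : l ≤ q) (hp : l ≤ p) (P : Matrix (Fin q) (Fin q) R) (Q : Matrix (Fin p) (Fin p) R),
    IsUnit P ∧ IsUnit Q ∧ (∀ i, d i ≠ 0) ∧
    (∀ (i : Fin l) (hi : (i : ℕ) + 1 < l), d i ∣ d ⟨(i : ℕ) + 1, hi⟩) ∧
    P * M * Q = blockDiag hq hp d

/-- Over a domain, the kernel of a matrix that is diagonalizable with a (nonzero)
divisibility chain of length `l` is a free module of rank `p - l` and is a direct summand
of `R^p`. -/
theorem ker_of_isDiagonalizableWithChain {R : Type*} [CommRing R] [IsDomain R] {q p : ℕ}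
    (M : Matrix (Fin q) (Fin p) R) (l : ℕ) (d : Fin l → R)
    (h : IsDiagonalizableWithChain M l d) :
    Nonempty (Module.Basis (Fin (p - l)) R (LinearMap.ker (Matrix.toLin' M))) ∧
    ∃ N : Submodule R (Fin p → R), IsCompl (LinearMap.ker (Matrix.toLin' M)) N := by
  obtain ⟨hq, hp, P, Q, hP, hQ, hd, -, hPMQ⟩ := h
  set e : Fin l ⊕ Fin (p - l) ≃ Fin p :=
    finSumFinEquiv.trans (finCongr (Nat.add_sub_cancel' hp)) with he
  -- coordinate subspaces
  let S : Submodule R (Fin p → R) :=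
    { carrier := {x | ∀ j : Fin l, x (e (Sum.inl j)) = 0}
      add_mem' := fun hx hy j => by simp [Pi.add_apply, hx j, hy j]
      zero_mem' := fun j => rfl
      smul_mem' := fun c x hx j => by simp [Pi.smul_apply, hx j] }
  let T : Submodule R (Fin p → R) :=
    { carrier := {x | ∀ j : Fin (p - l), x (e (Sum.inr j)) = 0}
      add_mem' := fun hx hy j => by simp [Pi.add_apply, hx j, hy j]
      zero_mem' := fun j => rfl
      smul_mem' := fun c x hx j => by simp [Pi.smul_apply, hx j] }
  have hST : IsCompl S T := by
    constructor
    · rw [disjoint_iff_inf_le]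
      rintro x ⟨hxS, hxT⟩
      funext i
      have : x (e (e.symm i)) = 0 := by
        rcases e.symm i with j | j
        · exact hxS j
        · exact hxT j
      simpa using this
    · rw [codisjoint_iff_le_sup]
      intro x _
      have hx1 : (fun i => Sum.elim (fun _ => (0 : R)) (fun _ => x i) (e.symm i)) ∈ S := by
        intro j; simp
      have hx2 : (fun i => Sum.elim (fun _ => x i) (fun _ => (0 : R)) (e.symm i)) ∈ T := by
        intro j; simp
      have hxx : x = (fun i => Sum.elim (fun _ => (0 : R)) (fun _ => x i) (e.symm i))
          + (fun i => Sum.elim (fun _ => x i) (fun _ => (0 : R)) (e.symm i)) := by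
        funext i
        rcases h' : e.symm i with j | j <;> simp [h']
      rw [hxx]
      exact Submodule.add_mem_sup hx1 hx2
  -- basis of S
  let ψ : S ≃ₗ[R] (Fin (p - l) → R) :=
    { toFun := fun x => fun j => (x : Fin p → R) (e (Sum.inr j))
      map_add' := fun x y => rfl
      map_smul' := fun c x => rfl
      invFun := fun y => ⟨fun i => Sum.elim (fun _ => (0 : R)) y (e.symm i), fun j => by simp⟩
      left_inv := fun x => by
        ext i
        show Sum.elim (fun _ => (0 : R)) _ (e.symm i) = (x : Fin p → R) i
        rcases h' : e.symm i with j | j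
        · have : i = e (Sum.inl j) := by rw [← h', Equiv.apply_symm_apply]
          simp [h', this, x.2 j]
        · have : i = e (Sum.inr j) := by rw [← h', Equiv.apply_symm_apply]
          simp [h', this]
      right_inv := fun y => by funext j; simp }
  -- kernel of the block diagonal matrix
  have hkerD : LinearMap.ker (Matrix.toLin' (blockDiag hq hp d)) = S := by
    ext x
    simp only [LinearMap.mem_ker, Matrix.toLin'_apply]
    constructor
    · intro hx j
      have h0 : (blockDiag hq hp d).mulVec x
          ((finSumFinEquiv.trans (finCongr (Nat.add_sub_cancel' hq))) (Sum.inl j)) = 0 := by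
        rw [hx]; rfl
      rw [blockDiag, Matrix.reindex_apply, Matrix.submatrix_mulVec_equiv] at h0
      simp only [Function.comp_apply, Equiv.symm_apply_apply, Matrix.fromBlocks_mulVec,
        Matrix.zero_mulVec, add_zero, Sum.elim_inl, Matrix.mulVec_diagonal] at h0
      exact (mul_eq_zero.mp h0).resolve_left (hd j)
    · intro hx
      rw [blockDiag, Matrix.reindex_apply, Matrix.submatrix_mulVec_equiv]
      funext i
      simp only [Function.comp_apply, Matrix.fromBlocks_mulVec, Matrix.zero_mulVec, add_zero,
        Pi.zero_apply]
      rcases (finSumFinEquiv.trans (finCongr (Nat.add_sub_cancel' hq))).symm i with j | j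
      · simp only [Sum.elim_inl, Matrix.mulVec_diagonal, Function.comp_apply]
        exact mul_eq_zero_of_right _ (hx j)
      · simp
  -- `toLin' Q` is a bijection
  have hQ' : IsUnit (Matrix.toLin' Q) :=
    hQ.map (Matrix.toLinAlgEquiv' : Matrix (Fin p) (Fin p) R ≃ₐ[R] _)
  have hbij : Function.Bijective (Matrix.toLin' Q) := (Module.End.isUnit_iff _).mp hQ'
  let eQ : (Fin p → R) ≃ₗ[R] (Fin p → R) := LinearEquiv.ofBijective (Matrix.toLin' Q) hbij
  obtain ⟨u, hu⟩ := hP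
  have hcomap : S = Submodule.comap (Matrix.toLin' Q) (LinearMap.ker (Matrix.toLin' M)) := by
    rw [← hkerD, ← hPMQ]
    ext x
    simp only [Submodule.mem_comap, LinearMap.mem_ker, Matrix.toLin'_apply]
    constructor
    · intro hx
      calc M.mulVec (Q.mulVec x) = (M * Q).mulVec x := by rw [Matrix.mulVec_mulVec]
        _ = (↑u⁻¹ : Matrix (Fin q) (Fin q) R).mulVec ((P * M * Q).mulVec x) := by
            rw [Matrix.mulVec_mulVec, ← hu, ← Matrix.mul_assoc, ← Matrix.mul_assoc,
              Units.inv_mul, Matrix.one_mul]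
        _ = 0 := by rw [hx, Matrix.mulVec_zero]
    · intro hx
      calc (P * M * Q).mulVec x = P.mulVec (M.mulVec (Q.mulVec x)) := by
            rw [Matrix.mulVec_mulVec, Matrix.mulVec_mulVec, Matrix.mul_assoc]
        _ = 0 := by rw [hx, Matrix.mulVec_zero]
  have hcoe : (eQ : (Fin p → R) →ₗ[R] (Fin p → R)) = Matrix.toLin' Q := rfl
  have hkerM : Submodule.map (eQ : (Fin p → R) →ₗ[R] (Fin p → R)) S
      = LinearMap.ker (Matrix.toLin' M) := by
    rw [hcoe, hcomap]
    exact Submodule.map_comap_eq_of_surjective hbij.surjective _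
  constructor
  · exact ⟨Module.Basis.ofEquivFun (((LinearEquiv.ofEq _ _ hkerM.symm).trans
      (eQ.submoduleMap S).symm).trans ψ)⟩
  · refine ⟨Submodule.map (eQ : (Fin p → R) →ₗ[R] (Fin p → R)) T, ?_⟩
    rw [← hkerM]
    have := (Submodule.orderIsoMapComap eQ).isCompl hST
    simpa [Submodule.orderIsoMapComap] using this
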